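/- Let k > 0, B > 0 and N ∈ ℕ. Then as n → ∞: exp(-B·n) · Σ over integers j with n^((k+1)/k) ≤ j < (n+1)^((k+1)/k) of (1 + exp(B·(j^(k/(k+1)) - (j-1)^(k/(k+1))))) · (1 + (B/3)·n^(-1/k))^(j+N) = O(exp(-B·n/4)). -/

import Mathlib

open Real Asymptotics Filter Topology

private lemma rpow_add_one_le_aux {d x : ℝ} (hd0 : 0 ≤ d) (hd1 : d ≤ 1) (hx : 0 ≤ x) :
    (x + 1) ^ d ≤ x ^ d + 1 := by
  have h := NNReal.coe_le_coe.mpr (NNReal.rpow_add_le_add_rpow x.toNNReal 1 hd0 hd1)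
  push_cast [NNReal.coe_rpow] at h
  rwa [Real.coe_toNNReal x hx, Real.one_rpow] at h

private lemma rpow_sub_le_one_aux {d : ℝ} (hd0 : 0 < d) (hd1 : d ≤ 1) (j : ℕ) :
    (j : ℝ) ^ d - ((j : ℝ) - 1) ^ d ≤ 1 := by
  rcases Nat.eq_zero_or_pos j with h | h
  · subst h
    simp only [Nat.cast_zero, zero_sub]
    rw [Real.zero_rpow hd0.ne', Real.rpow_def_of_neg (by norm_num : (-1 : ℝ) < 0)]
    have hlog : Real.log (-1) = 0 := by
      rw [show (-1 : ℝ) = -(1 : ℝ) by norm_num, Real.log_neg_eq_log, Real.log_one]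
    rw [hlog, zero_mul, Real.exp_zero, one_mul]
    have := Real.neg_one_le_cos (d * Real.pi)
    linarith
  · have hx : (0 : ℝ) ≤ (j : ℝ) - 1 := by
      have : (1 : ℝ) ≤ (j : ℝ) := by exact_mod_cast h
      linarith
    have := rpow_add_one_le_aux hd0.le hd1 hx
    have hj : ((j : ℝ) - 1) + 1 = (j : ℝ) := by ring
    rw [hj] at this
    linarith

theorem stmt14 (k B : ℝ) (hk : 0 < k) (hB : 0 < B) (N : ℕ) :
    (fun n : ℕ =>
        Real.exp (-B * n) *
          ∑' j : ℕ, (if (n : ℝ) ^ ((k + 1) / k) ≤ (j : ℝ) ∧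
                (j : ℝ) < ((n : ℝ) + 1) ^ ((k + 1) / k)
              then (1 + Real.exp (B * ((j : ℝ) ^ (k / (k + 1)) - ((j : ℝ) - 1) ^ (k / (k + 1))))) *
                (1 + (B / 3) * (n : ℝ) ^ (-(1 : ℝ) / k)) ^ (j + N)
              else 0)) =O[atTop]
      (fun n : ℕ => Real.exp (-B * n / 4)) := by
  have hk1 : (0 : ℝ) < k + 1 := by linarith
  set c : ℝ := (k + 1) / k with hcdef
  set d : ℝ := k / (k + 1) with hddef
  have hd0 : 0 < d := div_pos hk hk1
  have hd1 : d ≤ 1 := by rw [hddef, div_le_one hk1]; linarith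
  set a : ℕ → ℝ := fun n => B / 3 * (n : ℝ) ^ (-(1 : ℝ) / k) with hadef
  have ha0 : ∀ n, 0 ≤ a n := fun n => by
    have : (0:ℝ) ≤ (n : ℝ) ^ (-(1 : ℝ) / k) := Real.rpow_nonneg (Nat.cast_nonneg n) _
    positivity
  set C : ℝ := (1 + Real.exp B) * Real.exp (B * N / 3) with hCdef
  have hC0 : 0 < C := by positivity
  -- key eventual fact : n^{-1/k} * (n+1)^c ≤ 3/2 * n
  have h32 : ∀ᶠ n : ℕ in atTop,
      (n : ℝ) ^ (-(1 : ℝ) / k) * ((n : ℝ) + 1) ^ c ≤ 3 / 2 * n := by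
    have h1 : Tendsto (fun n : ℕ => ((n : ℝ) + 1) / n) atTop (𝓝 1) := by
      have h0 : Tendsto (fun n : ℕ => 1 + 1 / (n : ℝ)) atTop (𝓝 1) := by
        simpa using tendsto_const_nhds.add (tendsto_one_div_atTop_nhds_zero_nat : Tendsto (fun n : ℕ => 1 / (n : ℝ)) atTop (𝓝 0))
      apply h0.congr'
      filter_upwards [eventually_ge_atTop 1] with n hn
      have hn' : (0 : ℝ) < n := by exact_mod_cast hn
      field_simp
    have h2 : Tendsto (fun n : ℕ => (((n : ℝ) + 1) / n) * (((n : ℝ) + 1) / n) ^ ((1 : ℝ) / k))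
        atTop (𝓝 1) := by
      have h := h1.mul (h1.rpow_const (Or.inr (by positivity : (0:ℝ) ≤ 1 / k)))
      simp only [Real.one_rpow, mul_one] at h
      exact h
    have h3 : ∀ᶠ n : ℕ in atTop,
        (((n : ℝ) + 1) / n) * (((n : ℝ) + 1) / n) ^ ((1 : ℝ) / k) ≤ 3 / 2 :=
      h2.eventually_le_const (by norm_num)
    filter_upwards [h3, eventually_ge_atTop 1] with n hn hn1
    have hn' : (0 : ℝ) < n := by exact_mod_cast hn1
    have hid : (n : ℝ) ^ (-(1 : ℝ) / k) * ((n : ℝ) + 1) ^ c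
        = (n : ℝ) * ((((n : ℝ) + 1) / n) * (((n : ℝ) + 1) / n) ^ ((1 : ℝ) / k)) := by
      have hcc : c = 1 + 1 / k := by rw [hcdef]; field_simp
      have hrk : (0 : ℝ) < (n : ℝ) ^ ((1 : ℝ) / k) := Real.rpow_pos_of_pos hn' _
      rw [hcc, Real.rpow_add (by positivity), Real.rpow_one,
        Real.div_rpow (by positivity) hn'.le,
        show -(1 : ℝ) / k = -(1 / k) by ring, Real.rpow_neg hn'.le]
      field_simp
    have hmul := mul_le_mul_of_nonneg_left hn hn'.le
    rw [hid]
    linarith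
  have key : ∀ᶠ n : ℕ in atTop,
      ‖Real.exp (-B * n) *
          ∑' j : ℕ, (if (n : ℝ) ^ c ≤ (j : ℝ) ∧ (j : ℝ) < ((n : ℝ) + 1) ^ c
              then (1 + Real.exp (B * ((j : ℝ) ^ d - ((j : ℝ) - 1) ^ d))) *
                (1 + a n) ^ (j + N)
              else 0)‖ ≤
        C * ‖(((n : ℝ) + 1) ^ c + 1) * Real.exp (-B * n / 2)‖ := by
    filter_upwards [h32, eventually_ge_atTop 1] with n h32n hn1
    have hn' : (0 : ℝ) < n := by exact_mod_cast hn1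
    set f : ℕ → ℝ := fun j => if (n : ℝ) ^ c ≤ (j : ℝ) ∧ (j : ℝ) < ((n : ℝ) + 1) ^ c
        then (1 + Real.exp (B * ((j : ℝ) ^ d - ((j : ℝ) - 1) ^ d))) * (1 + a n) ^ (j + N)
        else 0 with hfdef
    set J : ℕ := ⌈((n : ℝ) + 1) ^ c⌉₊ with hJdef
    set T : ℝ := (1 + Real.exp B) * Real.exp (a n * (((n : ℝ) + 1) ^ c + N)) with hTdef
    have hT0 : 0 ≤ T := by positivity
    have h1a : (0 : ℝ) ≤ 1 + a n := by have := ha0 n; linarith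
    have hf0 : ∀ j, 0 ≤ f j := by
      intro j
      rw [hfdef]; dsimp only; split
      · exact mul_nonneg (by positivity) (pow_nonneg h1a _)
      · exact le_refl 0
    have hsum : (∑' j : ℕ, f j) = ∑ j ∈ Finset.range J, f j := by
      apply tsum_eq_sum
      intro j hj
      have hJj : J ≤ j := not_lt.mp (fun h => hj (Finset.mem_range.mpr h))
      rw [hfdef]; dsimp only
      rw [if_neg]
      rintro ⟨-, h2⟩
      have : ((n : ℝ) + 1) ^ c ≤ (j : ℝ) :=
        le_trans (Nat.le_ceil _) (Nat.cast_le.mpr hJj)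
      linarith
    have hterm : ∀ j ∈ Finset.range J, f j ≤ T := by
      intro j _
      rw [hfdef]; dsimp only
      split
      case isTrue hcond =>
        obtain ⟨-, h2⟩ := hcond
        have e1 : 1 + Real.exp (B * ((j : ℝ) ^ d - ((j : ℝ) - 1) ^ d)) ≤ 1 + Real.exp B := by
          have hdle := rpow_sub_le_one_aux hd0 hd1 j
          have hmul := mul_le_mul_of_nonneg_left hdle hB.le
          rw [mul_one] at hmul
          linarith [Real.exp_le_exp.mpr hmul]
        have e2 : (1 + a n) ^ (j + N) ≤ Real.exp (a n * (((n : ℝ) + 1) ^ c + N)) := by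
          calc (1 + a n) ^ (j + N) ≤ Real.exp (a n) ^ (j + N) := by
                apply pow_le_pow_left₀ h1a
                linarith [Real.add_one_le_exp (a n)]
            _ = Real.exp (((j + N : ℕ) : ℝ) * a n) := (Real.exp_nat_mul _ _).symm
            _ ≤ Real.exp (a n * (((n : ℝ) + 1) ^ c + N)) := by
                apply Real.exp_le_exp.mpr
                rw [mul_comm]
                apply mul_le_mul_of_nonneg_left _ (ha0 n)
                push_cast
                linarith
        exact mul_le_mul e1 e2 (pow_nonneg h1a _) (by positivity)
      case isFalse hcond => exact hT0
    have hsum_le : ∑ j ∈ Finset.range J, f j ≤ (J : ℝ) * T := by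
      have := Finset.sum_le_card_nsmul (Finset.range J) f T hterm
      simpa [Finset.card_range, nsmul_eq_mul] using this
    have hJ : (J : ℝ) ≤ ((n : ℝ) + 1) ^ c + 1 := (Nat.ceil_lt_add_one (by positivity)).le
    have hnk : (n : ℝ) ^ (-(1 : ℝ) / k) ≤ 1 := by
      apply Real.rpow_le_one_of_one_le_of_nonpos (by exact_mod_cast hn1)
      rw [neg_div]
      exact neg_nonpos.mpr (by positivity)
    have hTle : T ≤ C * Real.exp (B * n / 2) := by
      have harg : a n * (((n : ℝ) + 1) ^ c + N) ≤ B * n / 2 + B * N / 3 := by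
        have hx0 : (0 : ℝ) ≤ (n : ℝ) ^ (-(1 : ℝ) / k) := Real.rpow_nonneg hn'.le _
        have t1 : B / 3 * ((n : ℝ) ^ (-(1 : ℝ) / k) * ((n : ℝ) + 1) ^ c)
            ≤ B / 3 * (3 / 2 * n) := mul_le_mul_of_nonneg_left h32n (by positivity)
        have t2 : B / 3 * (N : ℝ) * ((n : ℝ) ^ (-(1 : ℝ) / k)) ≤ B / 3 * (N : ℝ) * 1 :=
          mul_le_mul_of_nonneg_left hnk (by positivity)
        rw [hadef]; dsimp only
        nlinarith [t1, t2]
      calc T = (1 + Real.exp B) * Real.exp (a n * (((n : ℝ) + 1) ^ c + N)) := rfl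
        _ ≤ (1 + Real.exp B) * Real.exp (B * n / 2 + B * N / 3) :=
            mul_le_mul_of_nonneg_left (Real.exp_le_exp.mpr harg) (by positivity)
        _ = C * Real.exp (B * n / 2) := by
            rw [hCdef, Real.exp_add]; ring
    have hfn0 : 0 ≤ Real.exp (-B * n) * ∑' j : ℕ, f j :=
      mul_nonneg (Real.exp_nonneg _) (tsum_nonneg hf0)
    rw [Real.norm_of_nonneg hfn0, Real.norm_of_nonneg (by positivity), hsum]
    have hstep : Real.exp (-B * n) * ∑ j ∈ Finset.range J, f j
        ≤ Real.exp (-B * n) * ((((n : ℝ) + 1) ^ c + 1) * (C * Real.exp (B * n / 2))) := by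
      apply mul_le_mul_of_nonneg_left _ (Real.exp_nonneg _)
      calc ∑ j ∈ Finset.range J, f j ≤ (J : ℝ) * T := hsum_le
        _ ≤ (((n : ℝ) + 1) ^ c + 1) * (C * Real.exp (B * n / 2)) :=
            mul_le_mul hJ hTle hT0 (by positivity)
    have hEq : Real.exp (-B * n) * ((((n : ℝ) + 1) ^ c + 1) * (C * Real.exp (B * n / 2)))
        = C * ((((n : ℝ) + 1) ^ c + 1) * Real.exp (-B * n / 2)) := by
      have hab : Real.exp (-B * n) * Real.exp (B * n / 2) = Real.exp (-B * n / 2) := by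
        rw [← Real.exp_add]; congr 1; ring
      rw [← hab]; ring
    linarith [hstep, hEq.le, hEq.ge]
  have step1 := IsBigO.of_bound C key
  refine step1.trans ?_
  have hA : Tendsto (fun x : ℝ => x ^ c * Real.exp (-(B / 4) * x)) atTop (𝓝 0) :=
    tendsto_rpow_mul_exp_neg_mul_atTop_nhds_zero c (B / 4) (by positivity)
  have hnat : Tendsto (fun n : ℕ => ((n : ℝ) + 1)) atTop atTop :=
    tendsto_atTop_add_const_right atTop 1 tendsto_natCast_atTop_atTop
  have t1 : Tendsto (fun n : ℕ => ((n : ℝ) + 1) ^ c * Real.exp (-B * n / 4)) atTop (𝓝 0) := by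
    have h := (hA.comp hnat).mul_const (Real.exp (B / 4))
    rw [zero_mul] at h
    apply h.congr
    intro n
    simp only [Function.comp_apply]
    rw [mul_assoc, ← Real.exp_add]
    congr 2
    ring
  have t2 : Tendsto (fun n : ℕ => Real.exp (-B * n / 4)) atTop (𝓝 0) := by
    have h : Tendsto (fun n : ℕ => B / 4 * (n : ℝ)) atTop atTop :=
      Tendsto.const_mul_atTop (by positivity) tendsto_natCast_atTop_atTop
    apply (Real.tendsto_exp_neg_atTop_nhds_zero.comp h).congr
    intro n
    simp only [Function.comp_apply]
    congr 1
    ring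
  have htend : Tendsto (fun n : ℕ => (((n : ℝ) + 1) ^ c + 1) * Real.exp (-B * n / 4))
      atTop (𝓝 0) := by
    have := t1.add t2
    rw [add_zero] at this
    exact this.congr (fun n => by ring)
  have hev : ∀ᶠ n : ℕ in atTop,
      (((n : ℝ) + 1) ^ c + 1) * Real.exp (-B * n / 4) ≤ 1 :=
    htend.eventually_le_const (by norm_num)
  apply IsBigO.of_bound 1
  filter_upwards [hev] with n hn
  rw [one_mul, Real.norm_of_nonneg (by positivity), Real.norm_of_nonneg (Real.exp_nonneg _)]
  have hE : Real.exp (-B * n / 2) = Real.exp (-B * n / 4) * Real.exp (-B * n / 4) := by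
    rw [← Real.exp_add]; congr 1; ring
  rw [hE, ← mul_assoc]
  exact mul_le_of_le_one_left (Real.exp_nonneg _) hn
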